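/- For every natural number n, the polynomial R_n satisfies the differential identity d/dz[(1-z^2) dR_n(z)/dz] + n(n+1) R_n(z) = 2[(z-1) dP_n(z)/dz - n P_n(z)] for all real z. -/

import Mathlib

/-- The `N`-th harmonic number `H_N = ∑_{k=1}^N 1/k` (with `H_0 = 0`). -/
noncomputable def H (N : ℕ) : ℝ := ∑ k ∈ Finset.Icc 1 N, (1 : ℝ) / k

/-- The Legendre polynomial of degree `n`,
`P_n(z) = 2^{-n} ∑_{k=0}^{n} (binom(n,k))² (z-1)^{n-k} (z+1)^k`, as a function on `ℝ`. -/
noncomputable def P (n : ℕ) (z : ℝ) : ℝ :=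
  (∑ k ∈ Finset.range (n + 1), ((n.choose k : ℝ)) ^ 2 * (z - 1) ^ (n - k) * (z + 1) ^ k) / 2 ^ n

/-- `R_n(z) = 2(H_{2n} - H_n) P_n(z)
               + 2 ∑_{k=0}^{n-1} (-1)^{n+k} (2k+1)/((n-k)(n+k+1)) P_k(z)`. -/
noncomputable def R (n : ℕ) (z : ℝ) : ℝ :=
  2 * (H (2 * n) - H n) * P n z +
    2 * ∑ k ∈ Finset.range n,
      (-1 : ℝ) ^ (n + k) * (2 * (k : ℝ) + 1) / (((n : ℝ) - k) * ((n : ℝ) + k + 1)) * P k z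

open Polynomial Finset

noncomputable def a (n m : ℕ) : ℝ := (n.choose m : ℝ) * ((n + m).choose m : ℝ) / 2 ^ m

noncomputable def pol (c : ℕ → ℝ) (N : ℕ) : Polynomial ℝ :=
  ∑ m ∈ Finset.range N, Polynomial.C (c m) * (Polynomial.X - Polynomial.C 1) ^ m

def sh (c : ℕ → ℝ) : ℕ → ℝ
  | 0 => 0
  | m + 1 => c m

lemma pol_eval (c : ℕ → ℝ) (N : ℕ) (z : ℝ) :
    (pol c N).eval z = ∑ m ∈ Finset.range N, c m * (z - 1) ^ m := by
  simp [pol, eval_finset_sum]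

lemma pol_congr {c d : ℕ → ℝ} {N : ℕ} (h : ∀ m < N, c m = d m) : pol c N = pol d N := by
  unfold pol
  apply Finset.sum_congr rfl
  intro m hm
  rw [h m (Finset.mem_range.1 hm)]

lemma pol_extend {c : ℕ → ℝ} {N M : ℕ} (hNM : N ≤ M) (h : ∀ m, N ≤ m → c m = 0) :
    pol c N = pol c M := by
  unfold pol
  apply Finset.sum_subset (Finset.range_subset_range.2 hNM)
  intro m _ hm
  rw [h m (by simpa using hm)]
  simp

lemma pol_derivative (c : ℕ → ℝ) (N : ℕ) :
    derivative (pol c (N + 1)) = pol (fun m => ((m : ℝ) + 1) * c (m + 1)) N := by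
  rw [pol, Finset.sum_range_succ', pol]
  simp only [derivative_add, derivative_mul, derivative_C, derivative_pow, derivative_sub,
    derivative_X, derivative_one, sub_zero, mul_one, zero_mul, add_zero, pow_zero]
  rw [map_sum]
  refine Finset.sum_congr rfl fun m hm => ?_
  simp only [derivative_mul, derivative_C, derivative_pow, derivative_sub, derivative_X,
    derivative_one, sub_zero, mul_one, zero_mul, zero_add]
  rw [← mul_assoc, ← C_mul, Nat.add_sub_cancel]
  congr 1
  push_cast
  ring

lemma pol_mul_u (c : ℕ → ℝ) (N : ℕ) :
    (X - C 1) * pol c N = pol (sh c) (N + 1) := by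
  rw [pol, pol, Finset.sum_range_succ', Finset.mul_sum]
  simp only [sh]
  simp only [map_zero, zero_mul, add_zero, pow_zero]
  refine Finset.sum_congr rfl fun m hm => ?_
  ring

lemma pol_smul (r : ℝ) (c : ℕ → ℝ) (N : ℕ) :
    C r * pol c N = pol (fun m => r * c m) N := by
  rw [pol, pol, Finset.mul_sum]
  refine Finset.sum_congr rfl fun m hm => ?_
  rw [map_mul]; ring

lemma pol_add (c d : ℕ → ℝ) (N : ℕ) :
    pol c N + pol d N = pol (fun m => c m + d m) N := by
  rw [pol, pol, pol, ← Finset.sum_add_distrib]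
  refine Finset.sum_congr rfl fun m hm => ?_
  rw [map_add]; ring

lemma pol_sum {ι : Type*} (s : Finset ι) (c : ι → ℕ → ℝ) (N : ℕ) :
    ∑ i ∈ s, pol (c i) N = pol (fun m => ∑ i ∈ s, c i m) N := by
  simp only [pol]
  rw [Finset.sum_comm]
  refine Finset.sum_congr rfl fun m hm => ?_
  rw [map_sum, Finset.sum_mul]

lemma a_top {n m : ℕ} (h : n < m) : a n m = 0 := by
  simp [a, Nat.choose_eq_zero_of_lt h]

lemma a_zero (n : ℕ) : a n 0 = 1 := by simp [a]

lemma recA (n m : ℕ) :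
    2 * ((m : ℝ) + 1) ^ 2 * a n (m + 1) = ((n : ℝ) - m) * ((n : ℝ) + m + 1) * a n m := by
  rcases le_or_gt n m with h | h
  · rcases h.lt_or_eq with h' | h'
    · rw [a_top h', a_top (by omega : n < m + 1)]; ring
    · subst h'
      rw [a_top (by omega : n < n + 1)]
      ring_nf
  · have h1 := Nat.choose_succ_right_eq n m
    have h2 := Nat.add_one_mul_choose_eq (n + m) m
    have c1 : (n.choose (m + 1) : ℝ) * ((m : ℝ) + 1) = (n.choose m : ℝ) * ((n : ℝ) - m) := by
      have := congrArg (Nat.cast : ℕ → ℝ) h1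
      push_cast [Nat.cast_sub h.le] at this
      linarith [this]
    have c2 : ((n : ℝ) + m + 1) * ((n + m).choose m : ℝ) =
        (((n + m + 1).choose (m + 1) : ℝ)) * ((m : ℝ) + 1) := by
      have := congrArg (Nat.cast : ℕ → ℝ) h2
      push_cast at this
      linarith [this]
    have key : ((m : ℝ) + 1) ^ 2 * (n.choose (m + 1) : ℝ) * ((n + m + 1).choose (m + 1) : ℝ) =
        ((n : ℝ) - m) * ((n : ℝ) + m + 1) * (n.choose m : ℝ) * ((n + m).choose m : ℝ) := by
      linear_combination (((n + m + 1).choose (m + 1) : ℝ) * ((m : ℝ) + 1)) * c1 -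
        (((n : ℝ) - m) * (n.choose m : ℝ)) * c2
    have hnm : n + (m + 1) = n + m + 1 := by ring
    rw [a, a, hnm, pow_succ]
    field_simp
    linear_combination ((2 : ℝ) ^ m * 2) * key

lemma recB (k m : ℕ) :
    ((k : ℝ) + 1 - m) * a (k + 1) m = ((k : ℝ) + m + 1) * a k m := by
  rcases le_or_gt m k with h | h
  · have e1a := Nat.choose_succ_right_eq (k + 1) m
    have e1b := Nat.add_one_mul_choose_eq k m
    have e2a := Nat.add_one_mul_choose_eq (k + m) m
    have e2b := Nat.choose_succ_right_eq (k + m + 1) m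
    have E1 : (k + 1).choose m * (k + 1 - m) = (k + 1) * k.choose m := by
      rw [← e1a]
      simpa [Nat.succ_eq_add_one] using e1b.symm
    have hkm : k + m + 1 - m = k + 1 := by omega
    have E2 : (k + m + 1) * (k + m).choose m = (k + m + 1).choose m * (k + 1) := by
      have := e2a
      rw [this, e2b, hkm]
    have E1r : ((k + 1).choose m : ℝ) * ((k : ℝ) + 1 - m) = ((k : ℝ) + 1) * (k.choose m : ℝ) := by
      have := congrArg (Nat.cast : ℕ → ℝ) E1
      push_cast [Nat.cast_sub (by omega : m ≤ k + 1)] at this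
      linarith [this]
    have E2r : ((k : ℝ) + m + 1) * ((k + m).choose m : ℝ) =
        ((k + m + 1).choose m : ℝ) * ((k : ℝ) + 1) := by
      have := congrArg (Nat.cast : ℕ → ℝ) E2
      push_cast at this
      linarith [this]
    have hkm2 : k + 1 + m = k + m + 1 := by omega
    rw [a, a, hkm2]
    linear_combination (((k + m + 1).choose m : ℝ) / 2 ^ m) * E1r -
      ((k.choose m : ℝ) / 2 ^ m) * E2r
  · rcases Nat.lt_or_ge (k + 1) m with h' | h'
    · rw [a_top h', a_top (by omega : k < m)]; ring
    · have hm : m = k + 1 := by omega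
      subst hm
      rw [a_top (by omega : k < k + 1)]
      push_cast
      ring

lemma tele (n m : ℕ) :
    ∑ k ∈ Finset.range n, (-1 : ℝ) ^ (n + k) * (2 * (k : ℝ) + 1) * a k m =
      ((m : ℝ) - n) * a n m := by
  have hG0 : ((0 : ℝ) - m) * a 0 m = 0 := by
    rcases Nat.eq_zero_or_pos m with hm | hm
    · subst hm; simp
    · rw [a_top hm]; ring
  have hstep : ∀ k, (-1 : ℝ) ^ (n + k) * (2 * (k : ℝ) + 1) * a k m =
      (-1 : ℝ) ^ (n + 1) *
        ((-1 : ℝ) ^ (k + 1) * ((((k + 1 : ℕ)) : ℝ) - m) * a (k + 1) m -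
         (-1 : ℝ) ^ k * ((k : ℝ) - m) * a k m) := by
    intro k
    have hb := recB k m
    rw [pow_add, pow_succ, pow_succ]
    push_cast
    linear_combination (-(-1 : ℝ) ^ n * (-1 : ℝ) ^ k) * hb
  rw [Finset.sum_congr rfl fun k _ => hstep k, ← Finset.mul_sum,
    Finset.sum_range_sub (fun k => (-1 : ℝ) ^ k * ((k : ℝ) - m) * a k m)]
  have h2 : (-1 : ℝ) ^ n * (-1 : ℝ) ^ n = 1 := by
    rw [← pow_add, ← two_mul, pow_mul]; norm_num
  push_cast
  push_cast at hG0
  linear_combination (-(-1 : ℝ) ^ (n + 1)) * hG0 - (((n : ℝ) - m) * a n m) * h2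

lemma pol_neg (c : ℕ → ℝ) (N : ℕ) : -pol c N = pol (fun m => -(c m)) N := by
  unfold pol
  rw [← Finset.sum_neg_distrib]
  apply Finset.sum_congr rfl
  intro m hm
  rw [map_neg]
  ring

noncomputable def q (n : ℕ) : Polynomial ℝ := pol (a n) (n + 1)

lemma q_extend (n N : ℕ) (h : n + 1 ≤ N) : q n = pol (a n) N :=
  pol_extend h fun m hm => a_top (by omega)

lemma q_deriv (n : ℕ) :
    derivative (q n) = pol (fun m => ((m : ℝ) + 1) * a n (m + 1)) (n + 1) := by
  rw [q_extend n (n + 2) (by omega)]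
  exact pol_derivative _ _

lemma ode (n : ℕ) :
    derivative ((1 - X ^ 2) * derivative (q n)) = C (-((n : ℝ) * ((n : ℝ) + 1))) * q n := by
  set d : ℕ → ℝ := fun m => ((m : ℝ) + 1) * a n (m + 1) with hd
  have h1 : (1 - X ^ 2 : Polynomial ℝ) * derivative (q n) =
      pol (fun m => -(sh (sh d) m) + -2 * sh d m) (n + 3) := by
    have e1 : (X - C 1) * pol d (n + 1) = pol (sh d) (n + 2) := pol_mul_u d (n + 1)
    have e2 : (X - C 1) * pol (sh d) (n + 2) = pol (sh (sh d)) (n + 3) := pol_mul_u _ _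
    have hext : pol (sh d) (n + 2) = pol (sh d) (n + 3) := by
      apply pol_extend (by omega)
      intro m hm
      match m, hm with
      | (m' + 1), hm =>
        show d m' = 0
        simp only [hd]
        rw [a_top (by omega)]; ring
    have hsplit : (1 - X ^ 2 : Polynomial ℝ) =
        -((X - C 1) * (X - C 1)) + (-2 : Polynomial ℝ) * (X - C 1) := by
      simp only [C_1]
      ring
    rw [q_deriv n, ← hd, hsplit]
    have hdistr : (-((X - C 1) * (X - C 1)) + (-2 : Polynomial ℝ) * (X - C 1)) * pol d (n + 1)
        = -((X - C 1) * ((X - C 1) * pol d (n + 1))) +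
          (-2 : Polynomial ℝ) * ((X - C 1) * pol d (n + 1)) := by
      ring
    rw [hdistr, e1, e2, hext]
    have hneg2 : (-2 : Polynomial ℝ) = C (-2 : ℝ) := by
      rw [map_neg, map_ofNat]
    rw [hneg2, pol_smul, pol_neg, pol_add]
  rw [h1]
  have h2 : derivative (pol (fun m => -(sh (sh d) m) + -2 * sh d m) (n + 2 + 1)) =
      pol (fun m => ((m : ℝ) + 1) * (-(sh (sh d) (m + 1)) + -2 * sh d (m + 1))) (n + 2) :=
    pol_derivative _ _
  rw [h2]
  have h3 : C (-((n : ℝ) * ((n : ℝ) + 1))) * q n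
      = pol (fun m => -((n : ℝ) * ((n : ℝ) + 1)) * a n m) (n + 2) := by
    rw [q_extend n (n + 2) (by omega), pol_smul]
  rw [h3]
  apply pol_congr
  intro m _
  match m with
  | 0 =>
    have hA := recA n 0
    simp only [sh, hd]
    push_cast at hA ⊢
    linear_combination -hA
  | (m' + 1) =>
    have hA := recA n (m' + 1)
    simp only [sh, hd]
    push_cast at hA ⊢
    linear_combination -hA

lemma ident (n : ℕ) :
    (X - C 1) * derivative (q n) - C (n : ℝ) * q n =
      ∑ k ∈ Finset.range n, C ((-1 : ℝ) ^ (n + k) * (2 * (k : ℝ) + 1)) * q k := by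
  set d : ℕ → ℝ := fun m => ((m : ℝ) + 1) * a n (m + 1) with hd
  have e1 : (X - C 1) * derivative (q n) = pol (sh d) (n + 2) := by
    rw [q_deriv n, ← hd]; exact pol_mul_u d (n + 1)
  have hext : pol (sh d) (n + 1) = pol (sh d) (n + 2) := by
    apply pol_extend (by omega)
    intro m hm
    match m, hm with
    | (m' + 1), hm =>
      show d m' = 0
      simp only [hd]
      rw [a_top (by omega)]; ring
  have e2 : C (n : ℝ) * q n = pol (fun m => (n : ℝ) * a n m) (n + 1) := by
    rw [q, pol_smul]
  rw [e1, ← hext, e2, sub_eq_add_neg, pol_neg, pol_add]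
  have e3 : ∀ k ∈ Finset.range n, C ((-1 : ℝ) ^ (n + k) * (2 * (k : ℝ) + 1)) * q k
      = pol (fun m => (-1 : ℝ) ^ (n + k) * (2 * (k : ℝ) + 1) * a k m) (n + 1) := by
    intro k hk
    simp only [Finset.mem_range] at hk
    rw [q_extend k (n + 1) (by omega), pol_smul]
  rw [Finset.sum_congr rfl e3, pol_sum]
  apply pol_congr
  intro m _
  rw [tele n m]
  match m with
  | 0 =>
    simp only [sh, hd]
    push_cast
    ring
  | (m' + 1) =>
    simp only [sh, hd]
    push_cast
    ring

lemma vand {n j : ℕ} (hj : j ≤ n) :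
    ∑ k ∈ Finset.range (n + 1), n.choose k * n.choose k * k.choose j
      = n.choose j * (2 * n - j).choose (n - j) := by
  have h1 : ∑ k ∈ Finset.range (n + 1), n.choose k * n.choose k * k.choose j
      = ∑ k ∈ Finset.Icc j n, n.choose k * n.choose k * k.choose j := by
    symm
    apply Finset.sum_subset
    · intro k hk
      simp only [Finset.mem_Icc] at hk
      simp only [Finset.mem_range]
      omega
    · intro k hk hk'
      simp only [Finset.mem_range] at hk
      simp only [Finset.mem_Icc, not_and, not_le] at hk'
      rw [Nat.choose_eq_zero_of_lt (show k < j by omega), mul_zero]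
  rw [h1, ← Finset.Ico_add_one_right_eq_Icc, Finset.sum_Ico_eq_sum_range]
  have h2 : ∀ t ∈ Finset.range (n + 1 - j),
      n.choose (j + t) * n.choose (j + t) * (j + t).choose j
      = n.choose j * (n.choose ((n - j) - t) * (n - j).choose t) := by
    intro t ht
    simp only [Finset.mem_range] at ht
    have hjt : j + t ≤ n := by omega
    have hcm := Nat.choose_mul (n := n) (Nat.le_add_right j t)
    rw [Nat.add_sub_cancel_left] at hcm
    rw [mul_assoc, hcm, ← Nat.choose_symm hjt]
    have hee : n - (j + t) = n - j - t := by omega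
    rw [hee]
    ring
  rw [Finset.sum_congr rfl h2, ← Finset.mul_sum]
  congr 1
  have hv := Nat.add_choose_eq (n - j) n (n - j)
  rw [Finset.Nat.sum_antidiagonal_eq_sum_range_succ_mk] at hv
  have h2n : n - j + n = 2 * n - j := by omega
  rw [h2n] at hv
  have hrange : n + 1 - j = n - j + 1 := by omega
  rw [hrange, hv]
  apply Finset.sum_congr rfl
  intro t ht
  rw [mul_comm]

lemma P_eq (n : ℕ) (z : ℝ) : P n z = (q n).eval z := by
  rw [q, pol_eval, P, div_eq_iff (by positivity : (2 : ℝ) ^ n ≠ 0)]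
  have inner : ∀ k ∈ Finset.range (n + 1),
      ((n.choose k : ℝ)) ^ 2 * (z - 1) ^ (n - k) * (z + 1) ^ k =
      ∑ j ∈ Finset.range (n + 1),
        (n.choose k : ℝ) ^ 2 * (k.choose j : ℝ) * 2 ^ j * (z - 1) ^ (n - j) := by
    intro k hk
    simp only [Finset.mem_range] at hk
    have hz : z + 1 = (z - 1) + 2 := by ring
    rw [hz, add_pow, Finset.mul_sum]
    have refl1 : ∑ j ∈ Finset.range (k + 1),
        (n.choose k : ℝ) ^ 2 * (z - 1) ^ (n - k) *
          ((z - 1) ^ j * 2 ^ (k - j) * (k.choose j : ℝ))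
        = ∑ j ∈ Finset.range (k + 1),
        (n.choose k : ℝ) ^ 2 * (z - 1) ^ (n - k) *
          ((z - 1) ^ (k - j) * 2 ^ (k - (k - j)) * (k.choose (k - j) : ℝ)) :=
      (Finset.sum_range_reflect
        (fun j => (n.choose k : ℝ) ^ 2 * (z - 1) ^ (n - k) *
          ((z - 1) ^ j * 2 ^ (k - j) * (k.choose j : ℝ))) (k + 1)).symm
    rw [refl1]
    have term : ∀ j ∈ Finset.range (k + 1),
        (n.choose k : ℝ) ^ 2 * (z - 1) ^ (n - k) *
          ((z - 1) ^ (k - j) * 2 ^ (k - (k - j)) * (k.choose (k - j) : ℝ))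
        = (n.choose k : ℝ) ^ 2 * (k.choose j : ℝ) * 2 ^ j * (z - 1) ^ (n - j) := by
      intro j hj
      simp only [Finset.mem_range] at hj
      have h1 : k - (k - j) = j := by omega
      have h2 : k.choose (k - j) = k.choose j := Nat.choose_symm (by omega)
      have h3 : (z - 1) ^ (n - k) * (z - 1) ^ (k - j) = (z - 1) ^ (n - j) := by
        rw [← pow_add]
        congr 1
        omega
      rw [h1, h2]
      calc (n.choose k : ℝ) ^ 2 * (z - 1) ^ (n - k) *
            ((z - 1) ^ (k - j) * 2 ^ j * (k.choose j : ℝ))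
          = (n.choose k : ℝ) ^ 2 * (k.choose j : ℝ) * 2 ^ j *
            ((z - 1) ^ (n - k) * (z - 1) ^ (k - j)) := by ring
        _ = _ := by rw [h3]
    rw [Finset.sum_congr rfl term]
    apply Finset.sum_subset (Finset.range_subset_range.2 (by omega))
    intro j _ hj
    simp only [Finset.mem_range] at hj
    rw [Nat.choose_eq_zero_of_lt (show k < j by omega)]
    push_cast
    ring
  rw [Finset.sum_congr rfl inner, Finset.sum_comm]
  have rhs1 : (∑ m ∈ Finset.range (n + 1), a n m * (z - 1) ^ m) * 2 ^ n
      = ∑ m ∈ Finset.range (n + 1), a n (n - m) * (z - 1) ^ (n - m) * 2 ^ n := by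
    rw [Finset.sum_mul]
    exact (Finset.sum_range_reflect (fun m => a n m * (z - 1) ^ m * 2 ^ n) (n + 1)).symm
  rw [rhs1]
  apply Finset.sum_congr rfl
  intro j hj
  simp only [Finset.mem_range] at hj
  have hjn : j ≤ n := by omega
  have hsum : ∑ k ∈ Finset.range (n + 1),
      (n.choose k : ℝ) ^ 2 * (k.choose j : ℝ) * 2 ^ j * (z - 1) ^ (n - j)
      = (↑(∑ k ∈ Finset.range (n + 1), n.choose k * n.choose k * k.choose j) : ℝ) *
        (2 ^ j * (z - 1) ^ (n - j)) := by
    push_cast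
    rw [Finset.sum_mul]
    apply Finset.sum_congr rfl
    intro k _
    ring
  rw [hsum, vand hjn]
  have ha : a n (n - j) * 2 ^ n
      = (n.choose j : ℝ) * ((2 * n - j).choose (n - j) : ℝ) * 2 ^ j := by
    rw [a]
    have h1 : n + (n - j) = 2 * n - j := by omega
    have h2 : n.choose (n - j) = n.choose j := Nat.choose_symm hjn
    rw [h1, h2]
    have h3 : (2 : ℝ) ^ n = 2 ^ (n - j) * 2 ^ j := by
      rw [← pow_add]
      congr 1
      omega
    rw [h3]
    field_simp
  push_cast
  push_cast at ha
  linear_combination (-(z - 1) ^ (n - j)) * ha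

noncomputable def L (p : Polynomial ℝ) : Polynomial ℝ :=
  derivative ((1 - Polynomial.X ^ 2) * derivative p)

lemma L_C_mul (c : ℝ) (p : Polynomial ℝ) : L (Polynomial.C c * p) = Polynomial.C c * L p := by
  unfold L
  rw [derivative_C_mul, mul_left_comm, derivative_C_mul]

lemma L_add (p p' : Polynomial ℝ) : L (p + p') = L p + L p' := by
  unfold L
  rw [derivative_add, mul_add, derivative_add]

lemma L_zero : L 0 = 0 := by unfold L; simp

lemma L_sum {ι : Type*} (s : Finset ι) (f : ι → Polynomial ℝ) :
    L (∑ i ∈ s, f i) = ∑ i ∈ s, L (f i) := by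
  classical
  induction s using Finset.cons_induction with
  | empty => simpa using L_zero
  | cons i s his ih => rw [Finset.sum_cons, Finset.sum_cons, L_add, ih]

/-- For every natural number `n` and all real `z`,
`d/dz[(1-z²) R_n'(z)] + n(n+1) R_n(z) = 2[(z-1) P_n'(z) - n P_n(z)]`. -/
theorem R_differential_identity (n : ℕ) (z : ℝ) :
    deriv (fun z => (1 - z ^ 2) * deriv (R n) z) z + (n : ℝ) * ((n : ℝ) + 1) * R n z =
      2 * ((z - 1) * deriv (P n) z - (n : ℝ) * P n z) := by
  classical
  set w : ℕ → ℝ := fun k =>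
    (-1 : ℝ) ^ (n + k) * (2 * (k : ℝ) + 1) / (((n : ℝ) - k) * ((n : ℝ) + k + 1)) with hw
  set r : Polynomial ℝ :=
    Polynomial.C (2 * (H (2 * n) - H n)) * q n +
      Polynomial.C 2 * ∑ k ∈ Finset.range n, Polynomial.C (w k) * q k with hr
  have hRr : R n = fun x => r.eval x := by
    funext x
    simp only [R, hr, eval_add, eval_mul, eval_C, eval_finset_sum, P_eq, hw]
  have hPq : P n = fun x => (q n).eval x := funext fun x => P_eq n x
  have hterm : ∀ k ∈ Finset.range n, L (Polynomial.C (w k) * q k)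
      = Polynomial.C (w k * -((k : ℝ) * ((k : ℝ) + 1))) * q k := by
    intro k _
    rw [L_C_mul]
    unfold L
    rw [ode k, ← mul_assoc, ← map_mul]
  have hS : (∑ k ∈ Finset.range n, Polynomial.C (w k * -((k : ℝ) * ((k : ℝ) + 1))) * q k) +
      Polynomial.C ((n : ℝ) * ((n : ℝ) + 1)) *
        ∑ k ∈ Finset.range n, Polynomial.C (w k) * q k =
      ∑ k ∈ Finset.range n, Polynomial.C ((-1 : ℝ) ^ (n + k) * (2 * (k : ℝ) + 1)) * q k := by
    rw [Finset.mul_sum, ← Finset.sum_add_distrib]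
    apply Finset.sum_congr rfl
    intro k hk
    simp only [Finset.mem_range] at hk
    have hne1 : ((n : ℝ) - k) ≠ 0 := by
      have : (k : ℝ) < n := by exact_mod_cast hk
      linarith
    have hne2 : ((n : ℝ) + k + 1) ≠ 0 := by positivity
    have hscalar : w k * -((k : ℝ) * ((k : ℝ) + 1)) + (n : ℝ) * ((n : ℝ) + 1) * w k
        = (-1 : ℝ) ^ (n + k) * (2 * (k : ℝ) + 1) := by
      rw [hw]
      field_simp
      ring
    rw [← mul_assoc, ← map_mul, ← add_mul, ← map_add, hscalar]
  have key : L r + Polynomial.C ((n : ℝ) * ((n : ℝ) + 1)) * r =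
      Polynomial.C 2 * ((X - Polynomial.C 1) * derivative (q n) -
        Polynomial.C (n : ℝ) * q n) := by
    rw [hr, L_add, L_C_mul, L_C_mul, L_sum, Finset.sum_congr rfl hterm, ident n]
    have hode : L (q n) = Polynomial.C (-((n : ℝ) * ((n : ℝ) + 1))) * q n := ode n
    rw [hode, map_neg]
    linear_combination (Polynomial.C (2 : ℝ)) * hS
  have hDR : deriv (R n) = fun x => (derivative r).eval x := by
    funext x
    rw [hRr]
    exact Polynomial.deriv (p := r)
  have hInner : (fun x => (1 - x ^ 2) * deriv (R n) x) =
      fun x => ((1 - Polynomial.X ^ 2) * derivative r).eval x := by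
    funext x
    rw [hDR]
    simp
  rw [hInner, hRr, hPq]
  rw [Polynomial.deriv, Polynomial.deriv]
  have hkey := congrArg (Polynomial.eval z) key
  simp only [L, eval_add, eval_mul, eval_C, eval_sub, eval_one, eval_pow, eval_X] at hkey
  linear_combination hkey
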